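/- Let Q_0,…,Q_k be complex polynomials and consider the equation Σ_{i=0}^k (α*)^i Q_i(α) = 0 in the variable α ∈ ℂ (where α* denotes complex conjugation). If max_i deg Q_i = deg Q_k = n > k and deg Q_0 = m > k, then this equation has at least one complex solution α. -/

import Mathlib

open Complex Polynomial

lemma normCircle (t θ : ℝ) : ‖(t:ℂ) * Complex.exp (θ * I)‖ = |t| := by
  rw [norm_mul, Complex.norm_exp_ofReal_mul_I, mul_one,
    Complex.norm_real, Real.norm_eq_abs]

lemma normExpMulI (t : ℝ) : ‖Complex.exp ((t:ℂ) * I)‖ = 1 := by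
  rw [Complex.norm_exp_ofReal_mul_I]

lemma contListSum (l : List ℂ) (G : ℂ → ℝ → ℂ) (h : ∀ r ∈ l, Continuous (G r)) :
    Continuous (fun θ => (l.map (fun r => G r θ)).sum) := by
  induction l with
  | nil => simpa using continuous_const
  | cons a t ih =>
    simp only [List.map_cons, List.sum_cons]
    exact (h a (by simp)).add (ih (fun r hr => h r (by simp [hr])))

lemma listProdLB (l : List ℝ) (c : ℝ) (hc : 0 ≤ c) (h : ∀ x ∈ l, c ≤ x) :
    c ^ l.length ≤ l.prod := by
  induction l with
  | nil => simp
  | cons a t ih =>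
    simp only [List.length_cons, List.prod_cons]
    have h1 : c ≤ a := h a (by simp)
    have h2 : c ^ t.length ≤ t.prod := ih (fun x hx => h x (by simp [hx]))
    have h3 : (0:ℝ) ≤ t.prod := le_trans (pow_nonneg hc _) h2
    calc c ^ (t.length + 1) = c ^ t.length * c := pow_succ c _
      _ ≤ t.prod * a := mul_le_mul h2 h1 hc h3
      _ = a * t.prod := mul_comm _ _

lemma listProdMulConst (l : List ℂ) (a : ℂ) (G : ℂ → ℂ) :
    (l.map (fun r => a * G r)).prod = a ^ l.length * (l.map G).prod := by
  induction l with
  | nil => simp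
  | cons b t ih =>
    simp only [List.map_cons, List.prod_cons, List.length_cons, ih]
    rw [pow_succ]
    ring

/-- Sum of the norms of the coefficients. -/
noncomputable def Scoef (q : Polynomial ℂ) : ℝ := ∑ j ∈ Finset.range (q.natDegree+1), ‖q.coeff j‖

lemma Scoef_nonneg (q : Polynomial ℂ) : 0 ≤ Scoef q :=
  Finset.sum_nonneg (fun j _ => norm_nonneg _)

lemma evalUB (q : Polynomial ℂ) (z : ℂ) (hz : 1 ≤ ‖z‖) :
    ‖q.eval z‖ ≤ Scoef q * ‖z‖ ^ q.natDegree := by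
  rw [Scoef, q.eval_eq_sum_range' (Nat.lt_succ_self _) z]
  calc ‖∑ j ∈ Finset.range (q.natDegree+1), q.coeff j * z ^ j‖
      ≤ ∑ j ∈ Finset.range (q.natDegree+1), ‖q.coeff j * z ^ j‖ := norm_sum_le _ _
    _ ≤ ∑ j ∈ Finset.range (q.natDegree+1), ‖q.coeff j‖ * ‖z‖ ^ q.natDegree := by
        apply Finset.sum_le_sum
        intro j hj
        rw [norm_mul, norm_pow]
        exact mul_le_mul_of_nonneg_left
          (pow_le_pow_right₀ hz (Nat.lt_succ_iff.mp (Finset.mem_range.mp hj))) (norm_nonneg _)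
    _ = _ := (Finset.sum_mul _ _ _).symm
/-- If `f` is continuous and nonvanishing on `ℂ`, then any continuous logarithm of `f`
along the circle of radius `R` has equal values at `0` and `2π`. -/
lemma windB (f : ℂ → ℂ) (hf : Continuous f) (h0 : ∀ z, f z ≠ 0) (R : ℝ) (hR : 0 ≤ R)
    (g : ℝ → ℂ) (hg : Continuous g)
    (hlift : ∀ θ : ℝ, Complex.exp (g θ) = f (R * Complex.exp (θ * I))) :
    g (2 * Real.pi) = g 0 := by
  obtain ⟨z₀, hz₀D, hz₀'⟩ := (isCompact_closedBall (0:ℂ) R).exists_isMinOn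
    ⟨0, by simpa using hR⟩ hf.norm.continuousOn
  set δ : ℝ := ‖f z₀‖ with hδdef
  have hz₀ : ∀ z ∈ Metric.closedBall (0:ℂ) R, δ ≤ ‖f z‖ := fun z hz => hz₀' hz
  have hδ : 0 < δ := norm_pos_iff.mpr (h0 z₀)
  have hmemD : ∀ t θ : ℝ, 0 ≤ t → t ≤ R → (t:ℂ) * Complex.exp (θ * I)
      ∈ Metric.closedBall (0:ℂ) R := by
    intro t θ h1 h2
    rw [Metric.mem_closedBall, dist_zero_right, normCircle, _root_.abs_of_nonneg h1]
    exact h2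
  have huc : UniformContinuousOn f (Metric.closedBall (0:ℂ) R) :=
    (isCompact_closedBall (0:ℂ) R).uniformContinuousOn_of_continuous hf.continuousOn
  rw [Metric.uniformContinuousOn_iff] at huc
  obtain ⟨ε, hεpos, hε⟩ := huc δ hδ
  obtain ⟨N, hN⟩ := exists_nat_gt (R / ε)
  have hNpos : 0 < N := by
    rcases Nat.eq_zero_or_pos N with h | h
    · subst h
      simp only [Nat.cast_zero] at hN
      exact absurd hN (not_lt.mpr (div_nonneg hR hεpos.le))
    · exact h
  have hNR : R / N < ε := by
    rw [div_lt_iff₀ (by positivity)]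
    rw [div_lt_iff₀ hεpos] at hN
    nlinarith [hεpos]
  have htle : ∀ j : ℕ, j ≤ N → (0:ℝ) ≤ (j:ℝ)/N * R ∧ (j:ℝ)/N * R ≤ R := by
    intro j hj
    constructor
    · positivity
    · calc (j:ℝ)/N * R ≤ 1 * R := by
            apply mul_le_mul_of_nonneg_right _ hR
            rw [div_le_one (by positivity)]
            exact_mod_cast hj
      _ = R := one_mul R
  -- the chain of lifts
  have key : ∀ j : ℕ, j ≤ N → ∃ h : ℝ → ℂ, Continuous h ∧
      (∀ θ : ℝ, Complex.exp (h θ) = f ((((j:ℝ)/N * R : ℝ) : ℂ) * Complex.exp (θ * I))) ∧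
      h (2 * Real.pi) = h 0 := by
    intro j
    induction j with
    | zero =>
      intro _
      refine ⟨fun _ => Complex.log (f 0), continuous_const, fun θ => ?_, rfl⟩
      rw [Complex.exp_log (h0 0)]
      norm_num
    | succ j ih =>
      intro hj
      obtain ⟨h, hcont, hh, hper⟩ := ih (Nat.le_of_succ_le hj)
      set a : ℝ → ℂ := fun θ => ((((j:ℝ)+1)/N * R : ℝ) : ℂ) * Complex.exp (θ * I) with ha
      set b : ℝ → ℂ := fun θ => (((j:ℝ)/N * R : ℝ) : ℂ) * Complex.exp (θ * I) with hb
      have haD : ∀ θ, a θ ∈ Metric.closedBall (0:ℂ) R := by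
        intro θ
        have := htle (j+1) hj
        push_cast at this
        exact hmemD _ θ this.1 this.2
      have hbD : ∀ θ, b θ ∈ Metric.closedBall (0:ℂ) R := by
        intro θ
        have := htle j (Nat.le_of_succ_le hj)
        exact hmemD _ θ this.1 this.2
      have hdist : ∀ θ, dist (a θ) (b θ) < ε := by
        intro θ
        rw [dist_eq_norm]
        have heq : a θ - b θ = ((R/N : ℝ) : ℂ) * Complex.exp (θ * I) := by
          rw [ha, hb]
          have hN0 : ((N:ℝ) : ℂ) ≠ 0 := by
            exact_mod_cast Nat.cast_ne_zero.mpr hNpos.ne'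
          push_cast
          field_simp
          ring
        rw [heq, normCircle, _root_.abs_of_nonneg (by positivity)]
        exact hNR
      have hq1 : ∀ θ, ‖f (a θ) / f (b θ) - 1‖ < 1 := by
        intro θ
        have hfb : f (b θ) ≠ 0 := h0 _
        have heq2 : f (a θ) / f (b θ) - 1 = (f (a θ) - f (b θ)) / f (b θ) := by
          field_simp
        rw [heq2, norm_div, div_lt_one (norm_pos_iff.mpr hfb)]
        calc ‖f (a θ) - f (b θ)‖ = dist (f (a θ)) (f (b θ)) := (dist_eq_norm _ _).symm
          _ < δ := hε _ (haD θ) _ (hbD θ) (hdist θ)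
          _ ≤ ‖f (b θ)‖ := hz₀ _ (hbD θ)
      have hqslit : ∀ θ, f (a θ) / f (b θ) ∈ Complex.slitPlane := by
        intro θ
        rw [Complex.mem_slitPlane_iff]
        left
        have h1 := hq1 θ
        have h2 := abs_le.mp (Complex.abs_re_le_norm (f (a θ) / f (b θ) - 1))
        have h3 : (f (a θ) / f (b θ)).re = 1 + (f (a θ) / f (b θ) - 1).re := by
          simp [Complex.sub_re]
        rw [h3]
        linarith [h2.1]
      refine ⟨fun θ => h θ + Complex.log (f (a θ) / f (b θ)), ?_, ?_, ?_⟩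
      · apply hcont.add
        apply Continuous.clog
        · exact (hf.comp (by fun_prop)).div (hf.comp (by fun_prop)) (fun θ => h0 _)
        · exact hqslit
      · intro θ
        rw [Complex.exp_add, hh θ, Complex.exp_log (div_ne_zero (h0 _) (h0 _)), mul_comm,
          div_mul_cancel₀ _ (h0 (b θ))]
        show f (a θ) = _
        rw [ha]
        congr 2
        push_cast
        ring
      · have hper2 : ∀ t : ℝ, (t:ℂ) * Complex.exp (((2*Real.pi : ℝ):ℂ) * I)
            = (t:ℂ) * Complex.exp (((0:ℝ):ℂ) * I) := by
          intro t
          rw [show ((2*Real.pi : ℝ):ℂ) * I = 2*Real.pi*I by push_cast; ring,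
            Complex.exp_two_pi_mul_I]
          norm_num
        have hA : a (2*Real.pi) = a 0 := hper2 _
        have hB : b (2*Real.pi) = b 0 := hper2 _
        simp only [hA, hB, hper]
  obtain ⟨h, hcont, hh, hper⟩ := key N le_rfl
  have hhR : ∀ θ : ℝ, Complex.exp (h θ) = f (R * Complex.exp (θ * I)) := by
    intro θ
    rw [hh θ]
    congr 2
    rw [div_self (by exact_mod_cast hNpos.ne' : (N:ℝ) ≠ 0), one_mul]
  -- uniqueness of lifts
  set d : ℝ → ℂ := fun θ => g θ - h θ with hd
  have hdc : Continuous d := hg.sub hcont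
  have hd1 : ∀ θ, Complex.exp (d θ) = 1 := by
    intro θ
    rw [hd]
    simp only
    rw [Complex.exp_sub, hlift θ, hhR θ, div_self (h0 _)]
  have hlc : ∀ θ₀ θ : ℝ, dist (d θ) (d θ₀) < 1 → d θ = d θ₀ := by
    intro θ₀ θ hdist
    have he : Complex.exp (d θ - d θ₀) = 1 := by
      rw [Complex.exp_sub, hd1, hd1, div_one]
    rw [Complex.exp_eq_one_iff] at he
    obtain ⟨m, hm⟩ := he
    have hnorm : ‖d θ - d θ₀‖ = |(m:ℝ)| * (2 * Real.pi) := by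
      rw [hm, norm_mul, norm_mul, norm_mul, Complex.norm_I, mul_one]
      rw [Complex.norm_intCast]
      norm_num [Complex.norm_real, Real.norm_eq_abs,
        _root_.abs_of_nonneg Real.pi_nonneg]
    rw [dist_eq_norm, hnorm] at hdist
    have hm0 : m = 0 := by
      by_contra hm0
      have h1m : (1:ℝ) ≤ |(m:ℝ)| := by
        rw [← Int.cast_abs]
        exact_mod_cast Int.one_le_abs hm0
      nlinarith [Real.pi_gt_three]
    rw [hm0] at hm
    simp only [Int.cast_zero, zero_mul] at hm
    exact sub_eq_zero.mp hm
  have hO : IsOpen {θ : ℝ | d θ = d 0} := by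
    rw [isOpen_iff_mem_nhds]
    intro θ₀ hθ₀
    have hev : ∀ᶠ θ in nhds θ₀, dist (d θ) (d θ₀) < 1 :=
      Metric.tendsto_nhds.mp (hdc.tendsto θ₀) 1 one_pos
    filter_upwards [hev] with θ hθ
    have := hlc θ₀ θ hθ
    show d θ = d 0
    rw [this]
    exact hθ₀
  have hC : IsClosed {θ : ℝ | d θ = d 0} := isClosed_eq hdc continuous_const
  have huniv : {θ : ℝ | d θ = d 0} = Set.univ := IsClopen.eq_univ ⟨hC, hO⟩ ⟨0, rfl⟩
  have h2π : d (2*Real.pi) = d 0 := Set.eq_univ_iff_forall.mp huniv (2*Real.pi)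
  have hd2 : g (2*Real.pi) - h (2*Real.pi) = g 0 - h 0 := h2π
  rw [hper] at hd2
  linear_combination hd2

/-- consider the equation `Σ_{i=0}^k (α*)^i Q_i(α) = 0` where the `Q_i` are
complex polynomials. If `max_i deg Q_i = deg Q_k = n > k` and `deg Q_0 = m > k`, then the
equation has at least one complex solution. -/
theorem stmt5 (k : ℕ) (Q : Fin (k + 1) → Polynomial ℂ)
    (hmax : ∀ i, (Q i).natDegree ≤ (Q (Fin.last k)).natDegree)
    (hn : k < (Q (Fin.last k)).natDegree)
    (hm : k < (Q 0).natDegree) :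
    ∃ α : ℂ, ∑ i : Fin (k + 1), (starRingEnd ℂ α) ^ (i : ℕ) * (Q i).eval α = 0 := by
  by_contra hcon
  push_neg at hcon
  set f : ℂ → ℂ := fun z => ∑ i : Fin (k+1), (starRingEnd ℂ z) ^ (i:ℕ) * (Q i).eval z with hfdef
  have hf0 : ∀ z, f z ≠ 0 := hcon
  have hfc : Continuous f := continuous_finset_sum _ (fun i _ =>
    ((Complex.continuous_conj.pow _).mul (Q i).continuous))
  set p : Polynomial ℂ := Q (Fin.last k) with hpdef
  set n : ℕ := p.natDegree with hndef
  have hkn : k < n := hn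
  have hp0 : p ≠ 0 := by
    intro h
    have hzero : n = 0 := by rw [hndef, h, Polynomial.natDegree_zero]
    omega
  set lc : ℂ := p.leadingCoeff with hlcdef
  have hlc : lc ≠ 0 := Polynomial.leadingCoeff_ne_zero.mpr hp0
  have hlcn : 0 < ‖lc‖ := norm_pos_iff.mpr hlc
  have hsplit : Polynomial.Splits p := IsAlgClosed.splits p
  set l : List ℂ := p.roots.toList with hldef
  have hlcoe : (↑l : Multiset ℂ) = p.roots := Multiset.coe_toList _
  have hlen : l.length = n := by
    rw [hldef, Multiset.length_toList, Polynomial.splits_iff_card_roots.mp hsplit]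
  have hprod : ∀ z : ℂ, p.eval z = lc * (l.map (fun r => z - r)).prod := by
    intro z
    conv_lhs => rw [hsplit.eq_prod_roots]
    rw [Polynomial.eval_mul, Polynomial.eval_C, Polynomial.eval_multiset_prod, ← hlcoe,
      Multiset.map_coe, Multiset.map_coe, Multiset.prod_coe, List.map_map]
    congr 1
    apply congrArg List.prod
    apply List.map_congr_left
    intro r _
    simp [Function.comp]
  set ρ : ℝ := (l.map (fun r => ‖r‖)).sum with hρdef
  have hρ0 : 0 ≤ ρ := List.sum_nonneg (by
    intro x hx
    obtain ⟨r, _, rfl⟩ := List.mem_map.mp hx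
    exact norm_nonneg r)
  have hρr : ∀ r ∈ l, ‖r‖ ≤ ρ := fun r hr =>
    List.single_le_sum (by
      intro x hx
      obtain ⟨s, _, rfl⟩ := List.mem_map.mp hx
      exact norm_nonneg s) _ (List.mem_map_of_mem hr)
  set Cc : ℝ := ∑ i : Fin k, Scoef (Q i.castSucc) with hCcdef
  have hCc0 : 0 ≤ Cc := Finset.sum_nonneg fun i _ => Scoef_nonneg _
  have hdivnn : 0 ≤ Cc * 2^n / ‖lc‖ := div_nonneg (mul_nonneg hCc0 (by positivity)) hlcn.le
  set R : ℝ := 3 + 2*ρ + Cc * 2^n / ‖lc‖ with hRdef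
  have hR1 : (1:ℝ) ≤ R := by rw [hRdef]; linarith
  have hR0 : (0:ℝ) < R := lt_of_lt_of_le one_pos hR1
  have hRρ : 2*ρ + 1 ≤ R := by rw [hRdef]; linarith
  have hRC : Cc * 2^n < ‖lc‖ * R := by
    have h1 : Cc * 2^n / ‖lc‖ < R := by rw [hRdef]; linarith
    calc Cc * 2^n = (Cc * 2^n / ‖lc‖) * ‖lc‖ := (div_mul_cancel₀ _ hlcn.ne').symm
      _ < R * ‖lc‖ := mul_lt_mul_of_pos_right h1 hlcn
      _ = ‖lc‖ * R := mul_comm _ _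
  have hRn : (0:ℂ) ≠ (R:ℂ) := by
    exact_mod_cast (Complex.ofReal_ne_zero.mpr hR0.ne').symm
  clear_value f p n lc l ρ Cc R
  -- the circle parametrization
  set z : ℝ → ℂ := fun θ => (R:ℂ) * Complex.exp ((θ:ℂ) * I) with hzdef
  have hzc : Continuous z := by
    rw [hzdef]
    exact continuous_const.mul ((Complex.continuous_ofReal.mul continuous_const).cexp)
  clear_value z
  have hzn : ∀ θ, ‖z θ‖ = R := by
    intro θ
    simp only [hzdef]
    rw [normCircle, _root_.abs_of_nonneg hR0.le]
  -- lower bound for factors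
  have hfac : ∀ θ, ∀ r ∈ l, R/2 ≤ ‖z θ - r‖ := by
    intro θ r hr
    have h1 : ‖z θ‖ - ‖r‖ ≤ ‖z θ - r‖ := norm_sub_norm_le _ _
    have h2 := hρr r hr
    rw [hzn θ] at h1
    linarith
  -- lower bound for |p.eval (z θ)|
  have hplb : ∀ θ, ‖lc‖ * (R/2)^n ≤ ‖p.eval (z θ)‖ := by
    intro θ
    rw [hprod (z θ), norm_mul]
    apply mul_le_mul_of_nonneg_left _ (norm_nonneg lc)
    have hnp : ‖(l.map (fun r => z θ - r)).prod‖ = (l.map (fun r => ‖z θ - r‖)).prod := by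
      rw [List.norm_prod, List.map_map]
      congr 1
    rw [hnp]
    have hlenm : (l.map (fun r => ‖z θ - r‖)).length = n := by rw [List.length_map, hlen]
    calc (R/2)^n = (R/2) ^ (l.map (fun r => ‖z θ - r‖)).length := by rw [hlenm]
      _ ≤ _ := listProdLB _ _ (by linarith) (by
          intro x hx
          obtain ⟨r, hr, rfl⟩ := List.mem_map.mp hx
          exact hfac θ r hr)
  -- the dominant term
  set c : ℝ → ℂ := fun θ => (starRingEnd ℂ (z θ))^k * p.eval (z θ) with hcdef
  have hcc : Continuous c := by
    rw [hcdef]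
    exact ((Complex.continuous_conj.comp hzc).pow k).mul (p.continuous.comp hzc)
  clear_value c
  have hcnorm : ∀ θ, ‖c θ‖ = R^k * ‖p.eval (z θ)‖ := by
    intro θ
    simp only [hcdef]
    rw [norm_mul, norm_pow, Complex.norm_conj, hzn]
  have hclb : ∀ θ, R^k * (‖lc‖ * (R/2)^n) ≤ ‖c θ‖ := by
    intro θ
    rw [hcnorm]
    exact mul_le_mul_of_nonneg_left (hplb θ) (by positivity)
  have hc0 : ∀ θ, c θ ≠ 0 := by
    intro θ
    have := hclb θ
    have hpos : (0:ℝ) < R^k * (‖lc‖ * (R/2)^n) := by positivity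
    exact norm_pos_iff.mp (lt_of_lt_of_le hpos this)
  -- tail estimate
  have hRouche : ∀ θ, ‖f (z θ) - c θ‖ < ‖c θ‖ := by
    intro θ
    have hsum : f (z θ) = (∑ i : Fin k, (starRingEnd ℂ (z θ)) ^ (i:ℕ) *
        (Q i.castSucc).eval (z θ)) + c θ := by
      simp only [hfdef, hcdef]
      rw [Fin.sum_univ_castSucc (f := fun i : Fin (k+1) =>
        (starRingEnd ℂ (z θ)) ^ (i:ℕ) * (Q i).eval (z θ))]
      simp [hpdef]
    have hzR1 : 1 ≤ ‖z θ‖ := by rw [hzn]; exact hR1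
    have hT : ‖f (z θ) - c θ‖ ≤ Cc * R^(k+n-1) := by
      rw [hsum, add_sub_cancel_right]
      calc ‖∑ i : Fin k, (starRingEnd ℂ (z θ)) ^ (i:ℕ) * (Q i.castSucc).eval (z θ)‖
          ≤ ∑ i : Fin k, ‖(starRingEnd ℂ (z θ)) ^ (i:ℕ) * (Q i.castSucc).eval (z θ)‖ :=
            norm_sum_le _ _
        _ ≤ ∑ i : Fin k, Scoef (Q i.castSucc) * R^(k+n-1) := by
            apply Finset.sum_le_sum
            intro i _
            rw [norm_mul, norm_pow, Complex.norm_conj,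
              hzn]
            have hub := evalUB (Q i.castSucc) (z θ) hzR1
            rw [hzn] at hub
            calc R ^ (i:ℕ) * ‖(Q i.castSucc).eval (z θ)‖
                ≤ R ^ (i:ℕ) * (Scoef (Q i.castSucc) * R ^ (Q i.castSucc).natDegree) := by
                  exact mul_le_mul_of_nonneg_left hub (by positivity)
              _ = Scoef (Q i.castSucc) * R ^ ((i:ℕ) + (Q i.castSucc).natDegree) := by
                  rw [pow_add]; ring
              _ ≤ Scoef (Q i.castSucc) * R ^ (k+n-1) := by
                  apply mul_le_mul_of_nonneg_left _ (Scoef_nonneg _)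
                  apply pow_le_pow_right₀ hR1
                  have h1 := i.isLt
                  have h2 := hmax i.castSucc
                  omega
        _ = Cc * R^(k+n-1) := by rw [hCcdef, Finset.sum_mul]
    have hkey : Cc * R^(k+n-1) < R^k * (‖lc‖ * (R/2)^n) := by
      have hA : (0:ℝ) < R^(k+n-1) := pow_pos hR0 _
      have h2n : (0:ℝ) < 2^n := by positivity
      have hpow : R^k * (R/2)^n = R^(k+n-1) * R / 2^n := by
        rw [div_pow, ← pow_succ, show k+n-1+1 = k+n by omega, pow_add]
        field_simp
      have h1 : (Cc * 2^n) * R^(k+n-1) < (‖lc‖ * R) * R^(k+n-1) :=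
        mul_lt_mul_of_pos_right hRC hA
      calc Cc * R^(k+n-1) = (Cc * 2^n) * R^(k+n-1) / 2^n := by field_simp
        _ < (‖lc‖ * R) * R^(k+n-1) / 2^n := by gcongr
        _ = R^k * (‖lc‖ * (R/2)^n) := by linear_combination (-‖lc‖) * hpow
    exact lt_of_le_of_lt hT (lt_of_lt_of_le hkey (hclb θ))
  -- the quotient u
  set u : ℝ → ℂ := fun θ => f (z θ) / c θ with hudef
  have hu0 : ∀ θ, u θ ≠ 0 := fun θ => div_ne_zero (hf0 _) (hc0 θ)
  have hu1 : ∀ θ, ‖u θ - 1‖ < 1 := by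
    intro θ
    have heq : u θ - 1 = (f (z θ) - c θ) / c θ := by
      rw [hudef]
      simp only
      rw [sub_div, div_self (hc0 θ)]
    rw [heq, norm_div, div_lt_one (norm_pos_iff.mpr (hc0 θ))]
    exact hRouche θ
  have hslit1 : ∀ w : ℂ, ‖w - 1‖ < 1 → w ∈ Complex.slitPlane := by
    intro w hw
    rw [Complex.mem_slitPlane_iff]
    left
    have h2 := abs_le.mp (Complex.abs_re_le_norm (w - 1))
    have h3 : w.re = 1 + (w - 1).re := by simp [Complex.sub_re]
    rw [h3]
    linarith [h2.1]
  have huc : Continuous u := by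
    rw [hudef]
    exact (hfc.comp hzc).div hcc hc0
  clear_value u
  -- the factors W
  set W : ℂ → ℝ → ℂ := fun r θ => 1 - r * Complex.exp (-(θ:ℂ) * I) / (R:ℂ) with hWdef
  have hWnorm : ∀ r ∈ l, ∀ θ : ℝ, ‖W r θ - 1‖ < 1 := by
    intro r hr θ
    simp only [hWdef]
    have h1 : (1:ℂ) - r * Complex.exp (-(θ:ℂ) * I) / (R:ℂ) - 1
        = -(r * Complex.exp (-(θ:ℂ) * I) / (R:ℂ)) := by ring
    rw [h1, norm_neg, norm_div, norm_mul]
    have h2 : -(θ:ℂ) * I = ((-θ:ℝ):ℂ) * I := by push_cast; ring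
    rw [h2, normExpMulI, mul_one]
    have h3 : ‖((R:ℝ):ℂ)‖ = R := by
      rw [Complex.norm_real, Real.norm_eq_abs, _root_.abs_of_nonneg hR0.le]
    rw [h3, div_lt_one hR0]
    have := hρr r hr
    linarith
  have hW0 : ∀ r ∈ l, ∀ θ : ℝ, W r θ ≠ 0 := by
    intro r hr θ h
    have := hWnorm r hr θ
    rw [h] at this
    simp at this
  have hWc : ∀ r : ℂ, Continuous (fun θ => W r θ) := by
    intro r
    simp only [hWdef]
    exact continuous_const.sub ((continuous_const.mul
      ((Complex.continuous_ofReal.neg.mul continuous_const).cexp)).div_const _)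
  clear_value W
  -- the explicit logarithm g
  set g : ℝ → ℂ := fun θ => Complex.log (lc * (R:ℂ)^(n+k)) + ((n:ℂ) - (k:ℂ)) * (θ:ℂ) * I
    + (l.map (fun r => Complex.log (W r θ))).sum + Complex.log (u θ) with hgdef
  have hgc : Continuous g := by
    rw [hgdef]
    refine ((continuous_const.add ?_).add ?_).add ?_
    · exact (continuous_const.mul Complex.continuous_ofReal).mul continuous_const
    · exact contListSum l (fun r θ => Complex.log (W r θ))
        (fun r hr => (hWc r).clog (fun θ => hslit1 _ (hWnorm r hr θ)))
    · exact huc.clog (fun θ => hslit1 _ (hu1 θ))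
  clear_value g
  have hRne : (R:ℂ) ≠ 0 := hRn.symm
  -- the dominant term in product form
  have hcform : ∀ θ : ℝ, c θ = lc * (R:ℂ)^(n+k) * Complex.exp (((n:ℂ) - (k:ℂ)) * (θ:ℂ) * I)
      * (l.map (fun r => W r θ)).prod := by
    intro θ
    have he1 : Complex.exp ((θ:ℂ)*I) * Complex.exp (-(θ:ℂ)*I) = 1 := by
      have h0 : (θ:ℂ)*I + -(θ:ℂ)*I = 0 := by ring
      rw [← Complex.exp_add, h0, Complex.exp_zero]
    have hconj : starRingEnd ℂ (z θ) = (R:ℂ) * Complex.exp (-(θ:ℂ) * I) := by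
      simp only [hzdef]
      rw [map_mul, Complex.conj_ofReal, ← Complex.exp_conj]
      congr 1
      rw [map_mul, Complex.conj_ofReal, Complex.conj_I]
      ring
    have hzr : ∀ r ∈ l, z θ - r = ((R:ℂ) * Complex.exp ((θ:ℂ)*I)) * W r θ := by
      intro r hr
      simp only [hzdef, hWdef]
      have hx : ((R:ℂ) * Complex.exp ((θ:ℂ)*I)) * (1 - r * Complex.exp (-(θ:ℂ)*I) / (R:ℂ))
          = (R:ℂ) * Complex.exp ((θ:ℂ)*I)
            - r * (Complex.exp ((θ:ℂ)*I) * Complex.exp (-(θ:ℂ)*I)) * ((R:ℂ)/(R:ℂ)) := by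
        ring
      rw [hx, he1, div_self hRne, mul_one, mul_one]
    simp only [hcdef]
    rw [hconj, hprod (z θ), List.map_congr_left hzr,
      listProdMulConst l ((R:ℂ) * Complex.exp ((θ:ℂ)*I)) (fun r => W r θ), hlen]
    have hsplit2 : ((n:ℂ) - (k:ℂ)) * (θ:ℂ) * I = (n:ℕ) * ((θ:ℂ)*I) + (k:ℕ) * (-(θ:ℂ)*I) := by
      push_cast
      ring
    rw [hsplit2, Complex.exp_add, Complex.exp_nat_mul, Complex.exp_nat_mul]
    ring
  -- g is a logarithm of f along the circle
  have hexp : ∀ θ : ℝ, Complex.exp (g θ) = f ((R:ℂ) * Complex.exp ((θ:ℂ) * I)) := by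
    intro θ
    rw [hgdef]
    simp only
    rw [Complex.exp_add, Complex.exp_add, Complex.exp_add,
      Complex.exp_log (mul_ne_zero hlc (pow_ne_zero _ hRne)),
      Complex.exp_log (hu0 θ), Complex.exp_list_sum, List.map_map]
    have hmapeq : (l.map (Complex.exp ∘ fun r => Complex.log (W r θ)))
        = l.map (fun r => W r θ) :=
      List.map_congr_left (fun r hr => by
        simp only [Function.comp_apply]
        exact Complex.exp_log (hW0 r hr θ))
    rw [hmapeq]
    have hgoal : lc * (R:ℂ)^(n+k) * Complex.exp (((n:ℂ)-(k:ℂ))*(θ:ℂ)*I)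
        * (l.map (fun r => W r θ)).prod * u θ = f (z θ) := by
      rw [← hcform θ, hudef]
      simp only
      rw [mul_comm]
      exact div_mul_cancel₀ _ (hc0 θ)
    rw [hgoal]
    simp only [hzdef]
  -- apply the winding lemma
  have hgper := windB f hfc hf0 R hR0.le g hgc hexp
  have hzper : z (2*Real.pi) = z 0 := by
    simp only [hzdef]
    rw [show ((2*Real.pi:ℝ):ℂ)*I = 2*Real.pi*I by push_cast; ring, Complex.exp_two_pi_mul_I]
    norm_num
  have hWper : ∀ r : ℂ, W r (2*Real.pi) = W r 0 := by
    intro r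
    simp only [hWdef]
    have h1 : Complex.exp (-((2*Real.pi:ℝ):ℂ)*I) = Complex.exp (-((0:ℝ):ℂ)*I) := by
      rw [show -((2*Real.pi:ℝ):ℂ)*I = -(2*Real.pi*I) by push_cast; ring, Complex.exp_neg,
        Complex.exp_two_pi_mul_I]
      norm_num
    rw [h1]
  have hcper : c (2*Real.pi) = c 0 := by
    simp only [hcdef]
    rw [hzper]
  have huper : u (2*Real.pi) = u 0 := by
    rw [hudef]
    simp only
    rw [hzper, hcper]
  rw [hgdef] at hgper
  simp only [huper, hWper, hzper] at hgper
  have hoff : ((n:ℂ) - (k:ℂ)) * ((2*Real.pi:ℝ):ℂ) * I = ((n:ℂ) - (k:ℂ)) * ((0:ℝ):ℂ) * I := by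
    linear_combination hgper
  have hzero : ((n:ℂ) - (k:ℂ)) * ((2*Real.pi:ℝ):ℂ) * I = 0 := by
    rw [hoff]
    push_cast
    ring
  have h2pi : ((2*Real.pi:ℝ):ℂ) ≠ 0 := by
    rw [Complex.ofReal_ne_zero]
    positivity
  rcases mul_eq_zero.mp hzero with h | h
  · rcases mul_eq_zero.mp h with h' | h'
    · have : (n:ℂ) = (k:ℂ) := by linear_combination h'
      have : n = k := Nat.cast_injective this
      omega
    · exact h2pi h'
  · exact Complex.I_ne_zero h
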